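/- arXiv:1404.2648 — 2 statements merged into one kernel-verified Lean document; each statement's English description precedes it below -/
import Mathlib

section
/- Let s = 1/2 + θ with 0 < θ < 1/2. For every ε > 0 there exist a constant K and a measurable set Ω₂ ⊆ Ω with P(Ω₂) ≥ 1 − ε such that for every ω ∈ Ω₂ and every N ∈ ℤ, r^{(2)}_N(ω) < K. -/
open MeasureTheory
open scoped ENNReal NNReal

/-- The set of representations of the integer `N` as a combination of sums and differences of
`m` distinct elements of `E ⊆ ℕ`: pairs `(A, B)` of disjoint finite subsets of `E` with
`|A| + |B| = m` and `(∑ a ∈ A, a) - (∑ b ∈ B, b) = N`. -/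
def repSet (m : ℕ) (E : Set ℕ) (N : ℤ) : Set (Finset ℕ × Finset ℕ) :=
  {p | ↑p.1 ⊆ E ∧ ↑p.2 ⊆ E ∧ Disjoint p.1 p.2 ∧ p.1.card + p.2.card = m ∧
    (∑ a ∈ p.1, (a : ℤ)) - ∑ b ∈ p.2, (b : ℤ) = N}

namespace R2


abbrev Rep : Type := Finset ℕ × Finset ℕ

def supp (p : Rep) : Finset ℕ := p.1 ∪ p.2

def rval (p : Rep) : ℤ := (∑ a ∈ p.1, (a : ℤ)) - ∑ b ∈ p.2, (b : ℤ)

def IsRep (p : Rep) : Prop :=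
  Disjoint p.1 p.2 ∧ p.1.card + p.2.card = 2 ∧ ∀ i ∈ supp p, 1 ≤ i

lemma card_supp {p : Rep} (hp : IsRep p) : (supp p).card = 2 := by
  rw [supp, Finset.card_union_of_disjoint hp.1]; exact hp.2.1

lemma mem_repSet {E : Set ℕ} (hE : ∀ n ∈ E, 1 ≤ n) {N : ℤ} {p : Rep}
    (h : p ∈ repSet 2 E N) : IsRep p ∧ rval p = N ∧ ↑(supp p) ⊆ E := by
  obtain ⟨h1, h2, h3, h4, h5⟩ := h
  have hsupp : ↑(supp p) ⊆ E := by
    intro i hi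
    simp only [supp, Finset.coe_union, Set.mem_union] at hi
    rcases hi with hi | hi
    · exact h1 hi
    · exact h2 hi
  exact ⟨⟨h3, h4, fun i hi => hE i (hsupp hi)⟩, h5, hsupp⟩

def cands (N : ℤ) (i : ℕ) : Finset Rep :=
  {({i, (N - (i:ℤ)).toNat}, ∅), ({i}, {((i:ℤ) - N).toNat}),
   ({(N + (i:ℤ)).toNat}, {i}), (∅, {i, (-N - (i:ℤ)).toNat})}

lemma card_cands (N : ℤ) (i : ℕ) : (cands N i).card ≤ 4 := by
  refine le_trans (Finset.card_insert_le _ _) ?_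
  refine Nat.succ_le_succ ?_
  refine le_trans (Finset.card_insert_le _ _) ?_
  refine Nat.succ_le_succ ?_
  refine le_trans (Finset.card_insert_le _ _) ?_
  simp

lemma mem_cands {N : ℤ} {i : ℕ} {q : Rep} (hq : IsRep q) (hv : rval q = N) (hi : i ∈ supp q) :
    q ∈ cands N i := by
  obtain ⟨hd, hc, -⟩ := hq
  have hcc : q.1.card = 0 ∧ q.2.card = 2 ∨ q.1.card = 1 ∧ q.2.card = 1 ∨
      q.1.card = 2 ∧ q.2.card = 0 := by omega
  simp only [cands, Finset.mem_insert, Finset.mem_singleton]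
  rcases hcc with ⟨hA, hB⟩ | ⟨hA, hB⟩ | ⟨hA, hB⟩
  · obtain h1 := Finset.card_eq_zero.mp hA
    obtain ⟨a, b, hab, h2⟩ := Finset.card_eq_two.mp hB
    rw [rval, h1, h2] at hv
    simp only [Finset.sum_empty, Finset.sum_pair hab] at hv
    simp only [supp, h1, h2, Finset.empty_union, Finset.mem_insert, Finset.mem_singleton] at hi
    right; right; right
    rcases hi with rfl | rfl
    · have hb : (-N - (i:ℤ)).toNat = b := by omega
      exact Prod.ext h1 (by rw [h2, hb])
    · have hb : (-N - (i:ℤ)).toNat = a := by omega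
      exact Prod.ext h1 (by rw [h2, hb, Finset.pair_comm])
  · obtain ⟨a, h1⟩ := Finset.card_eq_one.mp hA
    obtain ⟨b, h2⟩ := Finset.card_eq_one.mp hB
    rw [rval, h1, h2] at hv
    simp only [Finset.sum_singleton] at hv
    simp only [supp, h1, h2, Finset.union_comm, Finset.mem_union, Finset.mem_singleton] at hi
    rcases hi with rfl | rfl
    · right; left
      have hb : ((i:ℤ) - N).toNat = b := by omega
      exact Prod.ext h1 (by rw [h2, hb])
    · right; right; left
      have ha : (N + (i:ℤ)).toNat = a := by omega
      exact Prod.ext (by rw [h1, ha]) h2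
  · obtain ⟨a, b, hab, h1⟩ := Finset.card_eq_two.mp hA
    obtain h2 := Finset.card_eq_zero.mp hB
    rw [rval, h1, h2] at hv
    simp only [Finset.sum_empty, Finset.sum_pair hab] at hv
    simp only [supp, h1, h2, Finset.union_empty, Finset.mem_insert, Finset.mem_singleton] at hi
    left
    rcases hi with rfl | rfl
    · have hb : (N - (i:ℤ)).toNat = b := by omega
      exact Prod.ext (by rw [h1, hb]) h2
    · have hb : (N - (i:ℤ)).toNat = a := by omega
      exact Prod.ext (by rw [h1, hb, Finset.pair_comm]) h2

lemma extract {E : Set ℕ} (hE : ∀ n ∈ E, 1 ≤ n) {N : ℤ} (j : ℕ) :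
    ∀ S : Finset Rep, ↑S ⊆ repSet 2 E N → 8 * j ≤ S.card →
    ∃ d : Fin j → Rep, (∀ u, d u ∈ S) ∧
      ∀ u v, u ≠ v → Disjoint (supp (d u)) (supp (d v)) := by
  induction j with
  | zero => exact fun S _ _ => ⟨fun u => u.elim0, fun u => u.elim0, fun u => u.elim0⟩
  | succ j ih =>
    intro S hS hcard
    obtain ⟨p, hp⟩ : S.Nonempty := Finset.card_pos.mp (by omega)
    obtain ⟨hpRep, hpval, -⟩ := mem_repSet hE (hS hp)
    obtain ⟨x, y, hxy, hsp⟩ := Finset.card_eq_two.mp (card_supp hpRep)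
    classical
    set Bad := S.filter (fun q => ¬ Disjoint (supp q) (supp p)) with hBad
    have hBsub : Bad ⊆ cands N x ∪ cands N y := by
      intro q hq
      simp only [hBad, Finset.mem_filter] at hq
      obtain ⟨hqS, hqd⟩ := hq
      obtain ⟨hqRep, hqval, -⟩ := mem_repSet hE (hS hqS)
      rw [Finset.not_disjoint_iff] at hqd
      obtain ⟨i, hiq, hip⟩ := hqd
      rw [hsp] at hip
      simp only [Finset.mem_insert, Finset.mem_singleton] at hip
      rcases hip with rfl | rfl
      · exact Finset.mem_union_left _ (mem_cands hqRep hqval hiq)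
      · exact Finset.mem_union_right _ (mem_cands hqRep hqval hiq)
    have hBcard : Bad.card ≤ 8 := by
      refine le_trans (Finset.card_le_card hBsub) (le_trans (Finset.card_union_le _ _) ?_)
      have := card_cands N x
      have := card_cands N y
      omega
    have hsplit : S ⊆ (S \ Bad) ∪ Bad := by
      intro a ha
      by_cases h : a ∈ Bad <;> simp [h, ha]
    have hS' : 8 * j ≤ (S \ Bad).card := by
      have h1 := Finset.card_le_card hsplit
      have h2 := Finset.card_union_le (S \ Bad) Bad
      omega
    obtain ⟨d', hd'S, hd'disj⟩ := ih (S \ Bad)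
      (subset_trans (Finset.coe_subset.mpr Finset.sdiff_subset) hS) hS'
    have hd'notBad : ∀ u, Disjoint (supp (d' u)) (supp p) := by
      intro u
      have h := Finset.mem_sdiff.mp (hd'S u)
      by_contra hcon
      exact h.2 (Finset.mem_filter.mpr ⟨h.1, hcon⟩)
    refine ⟨Fin.cons p d', ?_, ?_⟩
    · intro u
      refine Fin.cases ?_ ?_ u
      · simpa using hp
      · intro u'
        simpa using (Finset.mem_sdiff.mp (hd'S u')).1
    · intro u v
      refine Fin.cases ?_ ?_ u
      · refine Fin.cases ?_ ?_ v
        · intro h; exact absurd rfl h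
        · intro v' _
          simpa using (hd'notBad v').symm
      · intro u'
        refine Fin.cases ?_ ?_ v
        · intro _
          simpa using hd'notBad u'
        · intro v' hne
          have huv' : u' ≠ v' := fun h => hne (by rw [h])
          simpa using hd'disj u' v' huv'



lemma cast_rpow {n : ℕ} (hn : 1 ≤ n) (r : ℝ) :
    (n : ℝ≥0∞) ^ r = ENNReal.ofReal ((n : ℝ) ^ r) := by
  rw [← ENNReal.ofReal_natCast n, ENNReal.ofReal_rpow_of_pos (by exact_mod_cast hn : (0:ℝ) < n)]

lemma rpow_anti {x y : ℝ≥0∞} (h : x ≤ y) {r : ℝ} (hr : r ≤ 0) : y ^ r ≤ x ^ r := by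
  calc y ^ r = (y ^ (-r))⁻¹ := by rw [← ENNReal.rpow_neg, neg_neg]
    _ ≤ (x ^ (-r))⁻¹ := ENNReal.inv_le_inv.mpr
        (ENNReal.rpow_le_rpow h (by linarith : (0:ℝ) ≤ -r))
    _ = x ^ r := by rw [← ENNReal.rpow_neg, neg_neg]

lemma sqrt_step (n : ℕ) :
    2 * Real.sqrt n + (Real.sqrt ((n:ℝ)+1))⁻¹ ≤ 2 * Real.sqrt ((n:ℝ)+1) := by
  have h1 : (0:ℝ) < (n:ℝ) + 1 := by positivity
  have hv : 0 < Real.sqrt ((n:ℝ)+1) := Real.sqrt_pos.mpr h1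
  have hu2 : Real.sqrt n ^ 2 = n := Real.sq_sqrt (Nat.cast_nonneg n)
  have hv2 : Real.sqrt ((n:ℝ)+1) ^ 2 = (n:ℝ)+1 := Real.sq_sqrt h1.le
  have hu : 0 ≤ Real.sqrt n := Real.sqrt_nonneg _
  have key : 2 * Real.sqrt n * Real.sqrt ((n:ℝ)+1) + 1 ≤ 2 * Real.sqrt ((n:ℝ)+1) ^ 2 := by
    nlinarith [sq_nonneg (Real.sqrt ((n:ℝ)+1) - Real.sqrt n)]
  have h2 : (Real.sqrt ((n:ℝ)+1))⁻¹ ≤ 2 * Real.sqrt ((n:ℝ)+1) - 2 * Real.sqrt n := by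
    rw [inv_eq_one_div, div_le_iff₀ hv]
    nlinarith
  linarith

lemma real_L1 (n : ℕ) :
    ∑ a ∈ Finset.Icc 1 n, ((a:ℝ) ^ (-(1/2) : ℝ)) ≤ 2 * Real.sqrt n := by
  induction n with
  | zero => simp
  | succ n ih =>
    rw [Finset.sum_Icc_succ_top (by omega)]
    have hc : ((n+1:ℕ):ℝ) = (n:ℝ) + 1 := by push_cast; ring
    have hstep : ((n+1:ℕ):ℝ) ^ (-(1/2):ℝ) = (Real.sqrt ((n:ℝ)+1))⁻¹ := by
      rw [hc, Real.rpow_neg (by positivity), Real.sqrt_eq_rpow]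
    rw [hstep, hc]
    have h := sqrt_step n
    refine le_trans (add_le_add ih le_rfl) ?_
    linarith

lemma L1E (n : ℕ) :
    ∑ a ∈ Finset.Icc 1 n, (a:ℝ≥0∞) ^ (-(1/2):ℝ) ≤ ENNReal.ofReal (2 * Real.sqrt n) := by
  have : ∑ a ∈ Finset.Icc 1 n, (a:ℝ≥0∞) ^ (-(1/2):ℝ)
      = ∑ a ∈ Finset.Icc 1 n, ENNReal.ofReal ((a:ℝ) ^ (-(1/2):ℝ)) := by
    refine Finset.sum_congr rfl fun a ha => ?_
    exact cast_rpow (Finset.mem_Icc.mp ha).1 _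
  rw [this, ← ENNReal.ofReal_sum_of_nonneg (fun a _ => by positivity)]
  exact ENNReal.ofReal_le_ofReal (real_L1 n)

lemma tsum_guard_rpow_ne_top {p : ℝ} (hp : 1 < p) :
    (∑' m : ℕ, if 1 ≤ m then (m:ℝ≥0∞) ^ (-p) else 0) ≠ ⊤ := by
  have heq : ∀ m : ℕ, (if 1 ≤ m then (m:ℝ≥0∞) ^ (-p) else 0)
      = ENNReal.ofReal (((m:ℝ) ^ p)⁻¹) := by
    intro m
    rcases Nat.eq_zero_or_pos m with rfl | hm
    · simp [Real.zero_rpow (by linarith : p ≠ 0)]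
    · rw [if_pos (by omega : 1 ≤ m), cast_rpow (by omega : 1 ≤ m), Real.rpow_neg (Nat.cast_nonneg m)]
  rw [tsum_congr heq, ← ENNReal.ofReal_tsum_of_nonneg (fun m => by positivity)
    (Real.summable_nat_rpow_inv.mpr hp)]
  exact ENNReal.ofReal_ne_top


noncomputable section
def Q (s : ℝ) (n : ℕ) : ℝ≥0∞ := (n : ℝ≥0∞) ^ (-s)

def w (s : ℝ) (p : Rep) : ℝ≥0∞ := ∏ i ∈ supp p, Q s i

open scoped Classical in
def G (s : ℝ) (N : ℤ) (p : Rep) : ℝ≥0∞ := if IsRep p ∧ rval p = N then w s p else 0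

def gsum (s : ℝ) (N : ℤ) : ℝ≥0∞ := ∑' p : Rep, G s N p

def Z (θ : ℝ) : ℝ≥0∞ := ∑' m : ℕ, if 1 ≤ m then (m : ℝ≥0∞) ^ (-(1 + θ)) else 0

lemma rval_ne_zero {p : Rep} (hp : IsRep p) : rval p ≠ 0 := by
  obtain ⟨hd, hc, h1⟩ := hp
  have hcc : p.1.card = 0 ∧ p.2.card = 2 ∨ p.1.card = 1 ∧ p.2.card = 1 ∨
      p.1.card = 2 ∧ p.2.card = 0 := by omega
  rcases hcc with ⟨hA, hB⟩ | ⟨hA, hB⟩ | ⟨hA, hB⟩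
  · obtain hp1 := Finset.card_eq_zero.mp hA
    obtain ⟨a, b, hab, hp2⟩ := Finset.card_eq_two.mp hB
    have ha : 1 ≤ a := h1 a (by simp [supp, hp1, hp2])
    rw [rval, hp1, hp2]
    simp only [Finset.sum_empty, Finset.sum_pair hab]
    omega
  · obtain ⟨a, hp1⟩ := Finset.card_eq_one.mp hA
    obtain ⟨b, hp2⟩ := Finset.card_eq_one.mp hB
    rw [hp1, hp2] at hd
    have hab : a ≠ b := by
      intro h
      subst h
      simp [Finset.disjoint_singleton] at hd
    rw [rval, hp1, hp2]
    simp only [Finset.sum_singleton]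
    omega
  · obtain ⟨a, b, hab, hp1⟩ := Finset.card_eq_two.mp hA
    obtain hp2 := Finset.card_eq_zero.mp hB
    have ha : 1 ≤ a := h1 a (by simp [supp, hp1, hp2])
    rw [rval, hp1, hp2]
    simp only [Finset.sum_empty, Finset.sum_pair hab]
    omega

lemma G_swap (s : ℝ) (N : ℤ) (p : Rep) : G s N (p.2, p.1) = G s (-N) p := by
  classical
  have hsupp : supp (p.2, p.1) = supp p := Finset.union_comm _ _
  have hrep : IsRep (p.2, p.1) ↔ IsRep p := by
    constructor
    · rintro ⟨a, b, c⟩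
      have b' : p.2.card + p.1.card = 2 := b
      exact ⟨a.symm, by omega, fun i hi => c i (by rwa [hsupp])⟩
    · rintro ⟨a, b, c⟩
      exact ⟨a.symm, (by omega : p.2.card + p.1.card = 2), fun i hi => c i (by rwa [hsupp] at hi)⟩
  have hval : rval (p.2, p.1) = -rval p := by unfold rval; ring
  have hiff : (IsRep (p.2, p.1) ∧ rval (p.2, p.1) = N) ↔ (IsRep p ∧ rval p = -N) := by
    rw [hval, hrep]
    constructor <;> rintro ⟨h1, h2⟩ <;> exact ⟨h1, by omega⟩
  rw [G, G, w, w, hsupp, if_congr hiff rfl rfl]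

lemma gsum_neg (s : ℝ) (N : ℤ) : gsum s (-N) = gsum s N := by
  unfold gsum
  calc ∑' p : Rep, G s (-N) p = ∑' p : Rep, G s N ((Equiv.prodComm (Finset ℕ) (Finset ℕ)) p) :=
        tsum_congr fun p => (G_swap s N p).symm
    _ = ∑' p : Rep, G s N p := (Equiv.prodComm _ _).tsum_eq _

lemma tsum_pi_fin {α : Type*} (g : α → ℝ≥0∞) (k : ℕ) :
    ∑' t : Fin k → α, ∏ j, g (t j) = (∑' x, g x) ^ k := by
  induction k with
  | zero =>
    rw [pow_zero, tsum_eq_single (fun i => i.elim0)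
      (fun b hb => absurd (funext fun i => i.elim0) hb)]
    simp
  | succ k ih =>
    rw [← (Fin.consEquiv (fun _ : Fin (k+1) => α)).tsum_eq]
    have hterm : ∀ x : α × (Fin k → α),
        (∏ j, g ((Fin.consEquiv (fun _ : Fin (k+1) => α)) x j)) = g x.1 * ∏ j, g (x.2 j) := by
      intro x
      rw [Fin.prod_univ_succ]
      simp [Fin.consEquiv]
    rw [tsum_congr hterm,
      show (∑' (b : α × (Fin k → α)), g b.1 * ∏ j, g (b.2 j))
        = ∑' (a : α), ∑' (t : Fin k → α), g a * ∏ j, g (t j) from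
        ENNReal.tsum_prod (f := fun (a : α) (t : Fin k → α) => g a * ∏ j, g (t j))]
    rw [tsum_congr fun a => ENNReal.tsum_mul_left (a := g a) (f := fun t : Fin k → α => ∏ j, g (t j))]
    rw [ENNReal.tsum_mul_right, ih, pow_succ, mul_comm]

def e1 (n a : ℕ) : Rep := if 2*a < n then (({a, n - a} : Finset ℕ), (∅ : Finset ℕ)) else (∅, {a})
def e2 (n m : ℕ) : Rep := ({m + n}, {m})

open scoped Classical in
def G1 (s : ℝ) (N : ℤ) (p : Rep) : ℝ≥0∞ := if p.1.card = 2 then G s N p else 0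
open scoped Classical in
def G2 (s : ℝ) (N : ℤ) (p : Rep) : ℝ≥0∞ := if p.1.card = 1 then G s N p else 0
open scoped Classical in
def G3 (s : ℝ) (N : ℤ) (p : Rep) : ℝ≥0∞ := if p.1.card = 0 then G s N p else 0

open scoped Classical in
def D1 (s : ℝ) (n a : ℕ) : ℝ≥0∞ :=
  (if 1 ≤ a ∧ a ≤ n then Q s a else 0) * (2 * (n : ℝ≥0∞) ^ (-s))
open scoped Classical in
def D2 (s : ℝ) (n m : ℕ) : ℝ≥0∞ := if 1 ≤ m then Q s m * Q s (m + n) else 0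

lemma Qhalf {s : ℝ} (hs0 : 0 ≤ s) (hs1 : s ≤ 1) {n b : ℕ} (hn : 1 ≤ n) (hb : n ≤ 2*b) :
    Q s b ≤ 2 * (n : ℝ≥0∞) ^ (-s) := by
  have hcast : (n : ℝ≥0∞) ≤ ((2*b : ℕ) : ℝ≥0∞) := Nat.cast_le.mpr hb
  have h2 : ((2*b : ℕ) : ℝ≥0∞) = 2 * (b : ℝ≥0∞) := by push_cast; ring
  have h3 := rpow_anti hcast (neg_nonpos.mpr hs0)
  rw [h2, ENNReal.mul_rpow_of_ne_zero (by norm_num) (Nat.cast_ne_zero.mpr (by omega))] at h3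
  have h4 : (2:ℝ≥0∞)^s * ((2:ℝ≥0∞)^(-s) * (b:ℝ≥0∞)^(-s)) ≤ (2:ℝ≥0∞)^s * (n:ℝ≥0∞)^(-s) :=
    mul_le_mul_right h3 _
  rw [← mul_assoc, ← ENNReal.rpow_add s (-s) (by norm_num) (by norm_num),
    show s + -s = 0 by ring, ENNReal.rpow_zero, one_mul] at h4
  refine h4.trans (mul_le_mul_left ?_ _)
  calc (2:ℝ≥0∞)^s ≤ (2:ℝ≥0∞)^(1:ℝ) := ENNReal.rpow_le_rpow_of_exponent_le (by norm_num) hs1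
    _ = 2 := ENNReal.rpow_one 2

lemma Qle {s : ℝ} (hs : 1/2 ≤ s) {a : ℕ} (ha : 1 ≤ a) : Q s a ≤ (a:ℝ≥0∞)^(-(1/2):ℝ) :=
  ENNReal.rpow_le_rpow_of_exponent_le (by exact_mod_cast ha) (by linarith)

lemma sum_Q_le {s : ℝ} (hs : 1/2 ≤ s) {n : ℕ} (hn : 1 ≤ n) :
    ∑ a ∈ Finset.Icc 1 n, Q s a ≤ 2 * (n:ℝ≥0∞)^((1/2):ℝ) := by
  refine le_trans (Finset.sum_le_sum fun a ha => Qle hs (Finset.mem_Icc.mp ha).1) ?_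
  refine (L1E n).trans ?_
  rw [ENNReal.ofReal_mul (by norm_num), Real.sqrt_eq_rpow, ← cast_rpow hn,
    (by norm_num : ENNReal.ofReal 2 = 2)]

lemma pow_combine {θ s : ℝ} (hs : s = 1/2 + θ) {n : ℕ} (hn : 1 ≤ n) :
    (n:ℝ≥0∞)^((1/2):ℝ) * (n:ℝ≥0∞)^(-s) = (n:ℝ≥0∞)^(-θ) := by
  rw [← ENNReal.rpow_add _ _ (Nat.cast_ne_zero.mpr (by omega)) (ENNReal.natCast_ne_top n)]
  congr 1
  rw [hs]; ring

lemma tsum_guard_Q {s : ℝ} (n : ℕ) :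
    (∑' a : ℕ, if 1 ≤ a ∧ a ≤ n then Q s a else 0) = ∑ a ∈ Finset.Icc 1 n, Q s a := by
  classical
  rw [tsum_eq_sum (s := Finset.Icc 1 n)
    (fun a ha => by rw [if_neg]; simp only [Finset.mem_Icc] at ha; omega)]
  exact Finset.sum_congr rfl fun a ha => by
    rw [if_pos]; exact ⟨(Finset.mem_Icc.mp ha).1, (Finset.mem_Icc.mp ha).2⟩

lemma tsum_D1_le {θ s : ℝ} (hθ0 : 0 < θ) (hθ1 : θ < 1/2) (hs : s = 1/2 + θ)
    {n : ℕ} (hn : 1 ≤ n) : ∑' a : ℕ, D1 s n a ≤ 4 * (n:ℝ≥0∞)^(-θ) := by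
  unfold D1
  rw [ENNReal.tsum_mul_right, tsum_guard_Q]
  calc (∑ a ∈ Finset.Icc 1 n, Q s a) * (2 * (n:ℝ≥0∞)^(-s))
      ≤ (2 * (n:ℝ≥0∞)^((1/2):ℝ)) * (2 * (n:ℝ≥0∞)^(-s)) :=
        mul_le_mul_left (sum_Q_le (by linarith) hn) _
    _ = 4 * ((n:ℝ≥0∞)^((1/2):ℝ) * (n:ℝ≥0∞)^(-s)) := by ring
    _ = 4 * (n:ℝ≥0∞)^(-θ) := by rw [pow_combine hs hn]

lemma tsum_D2_le {θ s : ℝ} (hθ0 : 0 < θ) (hθ1 : θ < 1/2) (hs : s = 1/2 + θ)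
    {n : ℕ} (hn : 1 ≤ n) : ∑' m : ℕ, D2 s n m ≤ (2 + Z θ) * (n:ℝ≥0∞)^(-θ) := by
  classical
  have hsplit : ∀ m : ℕ, D2 s n m =
      (if 1 ≤ m ∧ m ≤ n then Q s m * Q s (m+n) else 0) +
      (if n < m then Q s m * Q s (m+n) else 0) := by
    intro m
    by_cases h1 : 1 ≤ m
    · rw [D2, if_pos h1]
      by_cases h2 : m ≤ n
      · rw [if_pos ⟨h1, h2⟩, if_neg (by omega), add_zero]
      · rw [if_neg (fun hc => h2 hc.2), if_pos (by omega), zero_add]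
    · rw [D2, if_neg h1, if_neg (fun hc => h1 hc.1), if_neg (by omega), add_zero]
  rw [tsum_congr hsplit, ENNReal.tsum_add]
  have hA : (∑' m : ℕ, if 1 ≤ m ∧ m ≤ n then Q s m * Q s (m+n) else 0)
      ≤ 2 * (n:ℝ≥0∞)^(-θ) := by
    have hpt : ∀ m : ℕ, (if 1 ≤ m ∧ m ≤ n then Q s m * Q s (m+n) else 0)
        ≤ (if 1 ≤ m ∧ m ≤ n then Q s m else 0) * (n:ℝ≥0∞)^(-s) := by
      intro m
      by_cases h : 1 ≤ m ∧ m ≤ n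
      · rw [if_pos h, if_pos h]
        exact mul_le_mul_right
          (rpow_anti (Nat.cast_le.mpr (by omega : n ≤ m + n)) (by linarith : -s ≤ 0)) _
      · rw [if_neg h, if_neg h, zero_mul]
    refine le_trans (Summable.tsum_le_tsum hpt ENNReal.summable ENNReal.summable) ?_
    rw [ENNReal.tsum_mul_right, tsum_guard_Q]
    calc (∑ a ∈ Finset.Icc 1 n, Q s a) * (n:ℝ≥0∞)^(-s)
        ≤ (2 * (n:ℝ≥0∞)^((1/2):ℝ)) * (n:ℝ≥0∞)^(-s) :=
          mul_le_mul_left (sum_Q_le (by linarith) hn) _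
      _ = 2 * ((n:ℝ≥0∞)^((1/2):ℝ) * (n:ℝ≥0∞)^(-s)) := by ring
      _ = 2 * (n:ℝ≥0∞)^(-θ) := by rw [pow_combine hs hn]
  have hB : (∑' m : ℕ, if n < m then Q s m * Q s (m+n) else 0)
      ≤ Z θ * (n:ℝ≥0∞)^(-θ) := by
    have hpt : ∀ m : ℕ, (if n < m then Q s m * Q s (m+n) else 0)
        ≤ (if 1 ≤ m then (m:ℝ≥0∞)^(-(1+θ)) else 0) * (n:ℝ≥0∞)^(-θ) := by
      intro m
      by_cases h : n < m
      · rw [if_pos h, if_pos (by omega)]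
        have hm0 : (m:ℝ≥0∞) ≠ 0 := Nat.cast_ne_zero.mpr (by omega)
        have t1 : Q s (m+n) ≤ Q s m :=
          rpow_anti (Nat.cast_le.mpr (by omega)) (by linarith : -s ≤ 0)
        have t2 : Q s m * Q s m = (m:ℝ≥0∞)^(-(1+θ)) * (m:ℝ≥0∞)^(-θ) := by
          rw [Q, ← ENNReal.rpow_add _ _ hm0 (ENNReal.natCast_ne_top m),
            ← ENNReal.rpow_add _ _ hm0 (ENNReal.natCast_ne_top m)]
          congr 1
          rw [hs]; ring
        have t3 : (m:ℝ≥0∞)^(-θ) ≤ (n:ℝ≥0∞)^(-θ) :=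
          rpow_anti (Nat.cast_le.mpr (by omega)) (by linarith)
        calc Q s m * Q s (m+n) ≤ Q s m * Q s m := mul_le_mul_right t1 _
          _ = (m:ℝ≥0∞)^(-(1+θ)) * (m:ℝ≥0∞)^(-θ) := t2
          _ ≤ (m:ℝ≥0∞)^(-(1+θ)) * (n:ℝ≥0∞)^(-θ) := mul_le_mul_right t3 _
      · rw [if_neg h]; exact zero_le
    refine le_trans (Summable.tsum_le_tsum hpt ENNReal.summable ENNReal.summable) ?_
    rw [ENNReal.tsum_mul_right, Z]
  calc _ ≤ 2 * (n:ℝ≥0∞)^(-θ) + Z θ * (n:ℝ≥0∞)^(-θ) := add_le_add hA hB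
    _ = (2 + Z θ) * (n:ℝ≥0∞)^(-θ) := by rw [add_mul]

lemma G_eq_shapes (s : ℝ) (N : ℤ) (p : Rep) :
    G s N p = G1 s N p + G2 s N p + G3 s N p := by
  classical
  by_cases h : IsRep p ∧ rval p = N
  · have hcard : p.1.card + p.2.card = 2 := h.1.2.1
    have hc : p.1.card = 0 ∨ p.1.card = 1 ∨ p.1.card = 2 := by omega
    rcases hc with hc | hc | hc <;> simp [G1, G2, G3, hc]
  · have hG : G s N p = 0 := if_neg h
    simp [G1, G2, G3, hG]

lemma tsum_G3_eq_zero (s : ℝ) {n : ℕ} (hn : 1 ≤ n) :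
    ∑' p : Rep, G3 s (n:ℤ) p = 0 := by
  classical
  rw [ENNReal.tsum_eq_zero]
  intro p
  rw [G3]
  by_cases hc : p.1.card = 0
  · rw [if_pos hc, G, if_neg]
    rintro ⟨⟨hd, hcards, helem⟩, hval⟩
    have hp1 : p.1 = ∅ := Finset.card_eq_zero.mp hc
    obtain ⟨a, b, hab, hp2⟩ := Finset.card_eq_two.mp (show p.2.card = 2 by omega)
    rw [rval, hp1, hp2] at hval
    simp only [Finset.sum_empty, Finset.sum_pair hab] at hval
    omega
  · rw [if_neg hc]

lemma tsum_G1_le {θ s : ℝ} (hθ0 : 0 < θ) (hθ1 : θ < 1/2) (hs : s = 1/2 + θ)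
    {n : ℕ} (hn : 1 ≤ n) :
    ∑' p : Rep, G1 s (n:ℤ) p ≤ ∑' a : ℕ, D1 s n a := by
  classical
  have hinj : Function.Injective (e1 n) := by
    intro a a' h
    by_cases h1 : 2*a < n <;> by_cases h2 : 2*a' < n <;>
      rw [e1, e1] at h
    · rw [if_pos h1, if_pos h2] at h
      have hf : ({a, n - a} : Finset ℕ) = {a', n - a'} := congrArg Prod.fst h
      have ha : a ∈ ({a', n - a'} : Finset ℕ) := hf ▸ (by simp)
      have ha' : a' ∈ ({a, n - a} : Finset ℕ) := hf.symm ▸ (by simp)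
      simp only [Finset.mem_insert, Finset.mem_singleton] at ha ha'
      omega
    · rw [if_pos h1, if_neg h2] at h
      exact absurd (congrArg Prod.fst h) (Finset.insert_ne_empty _ _)
    · rw [if_neg h1, if_pos h2] at h
      exact absurd (congrArg Prod.fst h).symm (Finset.insert_ne_empty _ _)
    · rw [if_neg h1, if_neg h2] at h
      have : ({a} : Finset ℕ) = {a'} := congrArg Prod.snd h
      simpa using this
  have hsupp : Function.support (G1 s (n:ℤ)) ⊆ Set.range (e1 n) := by
    intro p hp
    rw [Function.mem_support] at hp
    by_cases hc : p.1.card = 2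
    swap
    · exact absurd (by rw [G1, if_neg hc]) hp
    have hG : G s (n:ℤ) p ≠ 0 := by rwa [G1, if_pos hc] at hp
    have hcond : IsRep p ∧ rval p = (n:ℤ) := by
      by_contra h
      exact hG (by rw [G, if_neg h])
    obtain ⟨⟨hd, hcards, helem⟩, hval⟩ := hcond
    have hp2 : p.2 = ∅ := Finset.card_eq_zero.mp (by omega)
    obtain ⟨x, y, hxy, hp1⟩ := Finset.card_eq_two.mp hc
    have hxyN : (x:ℤ) + y = (n:ℤ) := by
      rw [rval, hp1, hp2] at hval
      simpa [Finset.sum_pair hxy] using hval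
    have hx1 : 1 ≤ x := helem x (by simp [supp, hp1])
    have hy1 : 1 ≤ y := helem y (by simp [supp, hp1])
    rcases Nat.lt_or_ge x y with hlt | hge
    · refine ⟨x, ?_⟩
      rw [e1, if_pos (by omega)]
      have hyx : n - x = y := by omega
      exact (Prod.ext (by rw [hp1, hyx]) hp2).symm
    · have hlt : y < x := by omega
      refine ⟨y, ?_⟩
      rw [e1, if_pos (by omega)]
      have hyx : n - y = x := by omega
      exact (Prod.ext (by rw [hp1, hyx, Finset.pair_comm]) hp2).symm
  rw [← Function.Injective.tsum_eq hinj hsupp]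
  refine Summable.tsum_le_tsum (fun a => ?_) ENNReal.summable ENNReal.summable
  by_cases h1 : 2*a < n
  · rw [e1, if_pos h1]
    have hne : a ≠ n - a := by omega
    have hcard2 : (({a, n - a}, (∅ : Finset ℕ)) : Rep).1.card = 2 := Finset.card_pair hne
    rw [G1, if_pos hcard2, G]
    by_cases hcond : IsRep (({a, n - a}, (∅ : Finset ℕ)) : Rep) ∧
        rval (({a, n - a}, (∅ : Finset ℕ)) : Rep) = (n:ℤ)
    · rw [if_pos hcond, w]
      have hsupp' : supp (({a, n - a}, (∅ : Finset ℕ)) : Rep) = {a, n - a} :=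
        Finset.union_empty _
      rw [hsupp', Finset.prod_pair hne]
      have ha1 : 1 ≤ a := hcond.1.2.2 a (by simp [supp])
      rw [D1, if_pos ⟨ha1, by omega⟩]
      exact mul_le_mul_right (Qhalf (by linarith) (by linarith) hn (by omega)) _
    · rw [if_neg hcond]
      exact zero_le
  · rw [e1, if_neg h1, G1, if_neg (by simp)]
    exact zero_le

lemma tsum_G2_le {θ s : ℝ} (hθ0 : 0 < θ) (hθ1 : θ < 1/2) (hs : s = 1/2 + θ)
    {n : ℕ} (hn : 1 ≤ n) :
    ∑' p : Rep, G2 s (n:ℤ) p ≤ ∑' m : ℕ, D2 s n m := by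
  classical
  have hinj : Function.Injective (e2 n) := by
    intro m m' h
    have : ({m} : Finset ℕ) = {m'} := congrArg Prod.snd h
    simpa using this
  have hsupp : Function.support (G2 s (n:ℤ)) ⊆ Set.range (e2 n) := by
    intro p hp
    rw [Function.mem_support] at hp
    by_cases hc : p.1.card = 1
    swap
    · exact absurd (by rw [G2, if_neg hc]) hp
    have hG : G s (n:ℤ) p ≠ 0 := by rwa [G2, if_pos hc] at hp
    have hcond : IsRep p ∧ rval p = (n:ℤ) := by
      by_contra h
      exact hG (by rw [G, if_neg h])
    obtain ⟨⟨hd, hcards, helem⟩, hval⟩ := hcond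
    obtain ⟨x, hp1⟩ := Finset.card_eq_one.mp hc
    obtain ⟨y, hp2⟩ := Finset.card_eq_one.mp (show p.2.card = 1 by omega)
    have hxyN : (x:ℤ) - y = (n:ℤ) := by
      rw [rval, hp1, hp2] at hval
      simpa using hval
    refine ⟨y, ?_⟩
    have hx : y + n = x := by omega
    exact (Prod.ext (by rw [hp1, e2, hx]) (by rw [hp2, e2])).symm
  rw [← Function.Injective.tsum_eq hinj hsupp]
  refine Summable.tsum_le_tsum (fun m => ?_) ENNReal.summable ENNReal.summable
  have hcard1 : ((e2 n m) : Rep).1.card = 1 := by rw [e2]; simp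
  rw [G2, if_pos hcard1, G]
  by_cases hcond : IsRep (e2 n m) ∧ rval (e2 n m) = (n:ℤ)
  · rw [if_pos hcond, w]
    have hne : m + n ≠ m := by omega
    have hsupp' : supp (e2 n m) = {m + n, m} := rfl
    rw [hsupp', Finset.prod_pair hne]
    have hm1 : 1 ≤ m := hcond.1.2.2 m (by simp [supp, e2])
    rw [D2, if_pos hm1, mul_comm]
  · rw [if_neg hcond]
    exact zero_le

lemma gsum_le {θ s : ℝ} (hθ0 : 0 < θ) (hθ1 : θ < 1/2) (hs : s = 1/2 + θ)
    {n : ℕ} (hn : 1 ≤ n) :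
    gsum s (n:ℤ) ≤ (6 + Z θ) * (n:ℝ≥0∞)^(-θ) := by
  rw [gsum, tsum_congr (G_eq_shapes s (n:ℤ)), ENNReal.tsum_add, ENNReal.tsum_add,
    tsum_G3_eq_zero s hn, add_zero]
  refine le_trans (add_le_add (tsum_G1_le hθ0 hθ1 hs hn) (tsum_G2_le hθ0 hθ1 hs hn)) ?_
  refine le_trans (add_le_add (tsum_D1_le hθ0 hθ1 hs hn) (tsum_D2_le hθ0 hθ1 hs hn)) ?_
  rw [← add_mul, show (4:ℝ≥0∞) + (2 + Z θ) = 6 + Z θ by ring]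

lemma gsum_int_le {θ s : ℝ} (hθ0 : 0 < θ) (hθ1 : θ < 1/2) (hs : s = 1/2 + θ)
    {N : ℤ} (hN : N ≠ 0) :
    gsum s N ≤ (6 + Z θ) * ((N.natAbs : ℝ≥0∞))^(-θ) := by
  obtain ⟨n, hn'⟩ : ∃ n : ℕ, N.natAbs = n := ⟨_, rfl⟩
  have hab : 1 ≤ n := by omega
  rw [hn']
  rcases Int.natAbs_eq N with h | h <;> rw [hn'] at h
  · rw [h]
    exact gsum_le hθ0 hθ1 hs hab
  · rw [h, gsum_neg]
    exact gsum_le hθ0 hθ1 hs hab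

def Config (k : ℕ) (c : Fin k → Rep) : Prop :=
  (∀ i, IsRep (c i)) ∧ (∀ i j, i ≠ j → Disjoint (supp (c i)) (supp (c j))) ∧
  ∀ i j, rval (c i) = rval (c j)

abbrev Cfg (k : ℕ) := {c : Fin k → Rep // Config k c}

lemma gsum_zero (s : ℝ) : gsum s 0 = 0 := by
  rw [gsum, ENNReal.tsum_eq_zero]
  intro p
  rw [G, if_neg]
  rintro ⟨h1, h2⟩
  exact rval_ne_zero h1 h2

lemma tsum_w_le {θ s : ℝ} (hθ0 : 0 < θ) (hθ1 : θ < 1/2) (hs : s = 1/2 + θ)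
    {k : ℕ} (hk : 1 ≤ k) :
    ∑' c : Cfg k, ∏ j, w s (c.1 j)
      ≤ 2 * ((6 + Z θ)^k * ∑' m : ℕ, (if 1 ≤ m then (m:ℝ≥0∞)^(-(θ*(k:ℝ))) else 0)) := by
  classical
  have hz : Fin k := ⟨0, by omega⟩
  set C := 6 + Z θ with hC
  set J := ∑' m : ℕ, (if 1 ≤ m then (m:ℝ≥0∞)^(-(θ*(k:ℝ))) else 0) with hJ
  set sgnN : Bool → ℕ → ℤ := fun b m => if b then (m:ℤ) else -(m:ℤ) with hsgnN
  set ι : Cfg k → Bool × ℕ × (Fin k → Rep) :=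
    fun c => (decide (0 ≤ rval (c.1 hz)), (rval (c.1 hz)).natAbs, c.1) with hι
  have hιinj : Function.Injective ι := by
    intro c c' h
    exact Subtype.ext (congrArg (fun x : Bool × ℕ × (Fin k → Rep) => x.2.2) h)
  set F : Bool × ℕ × (Fin k → Rep) → ℝ≥0∞ :=
    fun x => ∏ j, G s (sgnN x.1 x.2.1) (x.2.2 j) with hF
  have hpt : ∀ c : Cfg k, (∏ j, w s (c.1 j)) ≤ F (ι c) := by
    intro c
    have hN : sgnN (decide (0 ≤ rval (c.1 hz))) (rval (c.1 hz)).natAbs = rval (c.1 hz) := by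
      simp only [hsgnN]
      rcases le_or_gt 0 (rval (c.1 hz)) with h | h
      · rw [if_pos (by simpa using h)]
        omega
      · rw [if_neg (by simpa using not_le.mpr h)]
        omega
    refine le_of_eq (Finset.prod_congr rfl fun j _ => ?_)
    show w s (c.1 j) = G s (sgnN (decide (0 ≤ rval (c.1 hz))) (rval (c.1 hz)).natAbs) (c.1 j)
    rw [hN, G, if_pos ⟨c.2.1 j, c.2.2.2 j hz⟩]
  refine le_trans (Summable.tsum_le_tsum hpt ENNReal.summable ENNReal.summable) ?_
  refine le_trans (ENNReal.tsum_comp_le_tsum_of_injective hιinj F) ?_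
  rw [show (∑' x : Bool × ℕ × (Fin k → Rep), F x)
      = ∑' (b : Bool), ∑' (y : ℕ × (Fin k → Rep)), F (b, y) from
      ENNReal.tsum_prod (f := fun b y => F (b, y))]
  have hbm : ∀ b : Bool, (∑' y : ℕ × (Fin k → Rep), F (b, y))
      = ∑' m : ℕ, (gsum s (sgnN b m))^k := by
    intro b
    rw [ENNReal.tsum_prod (f := fun (m : ℕ) (t : Fin k → Rep) => F (b, (m, t)))]
    exact tsum_congr fun m => tsum_pi_fin (G s (sgnN b m)) k
  rw [tsum_congr hbm]
  have hterm : ∀ b : Bool, ∀ m : ℕ,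
      (gsum s (sgnN b m))^k ≤ C^k * (if 1 ≤ m then (m:ℝ≥0∞)^(-(θ*(k:ℝ))) else 0) := by
    intro b m
    rcases Nat.eq_zero_or_pos m with rfl | hm
    · have h0 : sgnN b 0 = 0 := by cases b <;> simp [hsgnN]
      rw [h0, gsum_zero, if_neg (by omega), mul_zero, zero_pow (by omega)]
    · have hne : sgnN b m ≠ 0 := by cases b <;> simp [hsgnN] <;> omega
      have habs : (sgnN b m).natAbs = m := by cases b <;> simp [hsgnN]
      have h1 := gsum_int_le hθ0 hθ1 hs hne
      rw [habs] at h1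
      calc (gsum s (sgnN b m))^k ≤ (C * (m:ℝ≥0∞)^(-θ))^k := pow_le_pow_left' h1 k
        _ = C^k * ((m:ℝ≥0∞)^(-θ))^k := mul_pow _ _ _
        _ = C^k * (m:ℝ≥0∞)^(-(θ*(k:ℝ))) := by
            rw [← ENNReal.rpow_natCast ((m:ℝ≥0∞)^(-θ)) k, ← ENNReal.rpow_mul,
              show (-θ)*(k:ℝ) = -(θ*(k:ℝ)) by ring]
        _ = C^k * (if 1 ≤ m then (m:ℝ≥0∞)^(-(θ*(k:ℝ))) else 0) := by
            rw [if_pos (show 1 ≤ m by omega)]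
  refine le_trans (Summable.tsum_le_tsum
    (fun b => Summable.tsum_le_tsum (hterm b) ENNReal.summable ENNReal.summable)
    ENNReal.summable ENNReal.summable) ?_
  rw [tsum_congr fun b : Bool => ENNReal.tsum_mul_left (a := C^k)
    (f := fun m : ℕ => if 1 ≤ m then (m:ℝ≥0∞)^(-(θ*(k:ℝ))) else 0)]
  rw [tsum_bool, two_mul]

end
end R2

open R2 in
/-- Let `s = 1/2 + θ` with `0 < θ < 1/2`. For every `ε > 0` there exist a constant `K` and a
measurable set `Ω₂` with `P(Ω₂) ≥ 1 - ε` such that `r_N^{(2)}(ω) < K` for every `ω ∈ Ω₂` and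
every `N ∈ ℤ`. -/
theorem exists_good_event_r2 {Ω : Type*} [MeasurableSpace Ω] (P : Measure Ω)
    [IsProbabilityMeasure P] (θ s : ℝ) (hθ₀ : 0 < θ) (hθ₁ : θ < 1 / 2)
    (hs : s = 1 / 2 + θ) (Y : ℕ → Ω → ℕ)
    (hmeas : ∀ n, Measurable (Y n))
    (hval : ∀ n ω, Y n ω = 0 ∨ Y n ω = 1)
    (hind : ProbabilityTheory.iIndepFun
      (fun n : {n : ℕ // 1 ≤ n} => Y n) P)
    (hP1 : ∀ n : ℕ, 1 ≤ n → P {ω | Y n ω = 1} = ENNReal.ofReal ((n : ℝ) ^ (-s)))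
    (ε : ℝ) (hε : 0 < ε) :
    ∃ K : ℕ, ∃ Ω₂ : Set Ω, MeasurableSet Ω₂ ∧ 1 - ENNReal.ofReal ε ≤ P Ω₂ ∧
      ∀ ω ∈ Ω₂, ∀ N : ℤ,
        (repSet 2 {n | 1 ≤ n ∧ Y n ω = 1} N).Finite ∧
          (repSet 2 {n | 1 ≤ n ∧ Y n ω = 1} N).ncard < K := by
  classical
  obtain ⟨k, hk1, hθk⟩ : ∃ k : ℕ, 1 ≤ k ∧ 1 < θ * k := by
    refine ⟨⌈1/θ⌉₊ + 2, by omega, ?_⟩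
    have h1 : (1:ℝ)/θ ≤ (⌈1/θ⌉₊ : ℝ) := Nat.le_ceil _
    have h2 : ((⌈1/θ⌉₊ + 2 : ℕ) : ℝ) = (⌈1/θ⌉₊ : ℝ) + 2 := by push_cast; ring
    have h3 : θ * (1/θ) = 1 := by field_simp
    rw [h2]
    nlinarith
  set term : Cfg k → Ω → ℝ≥0∞ :=
    fun c ω => ∏ j, ∏ i ∈ supp (c.1 j), ((Y i ω : ℕ) : ℝ≥0∞) with hterm
  set W : Ω → ℝ≥0∞ := fun ω => ∑' c : Cfg k, term c ω with hW
  have htermmeas : ∀ c : Cfg k, Measurable (term c) := fun c =>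
    Finset.measurable_prod _ fun j _ =>
      Finset.measurable_prod _ fun i _ => measurable_from_top.comp (hmeas i)
  have hWmeas : Measurable W := Measurable.ennreal_tsum htermmeas
  -- the expectation of each term
  have hterm_int : ∀ c : Cfg k, ∫⁻ ω, term c ω ∂P = ∏ j, w s (c.1 j) := by
    intro c
    set U : Finset ℕ := Finset.univ.biUnion (fun j => supp (c.1 j)) with hU
    have hPD : ((Finset.univ : Finset (Fin k)) : Set (Fin k)).PairwiseDisjoint
        (fun j => supp (c.1 j)) := fun i _ j _ hij => c.2.2.1 i j hij
    have hU1 : ∀ i ∈ U, 1 ≤ i := by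
      intro i hi
      rw [hU, Finset.mem_biUnion] at hi
      obtain ⟨j, -, hij⟩ := hi
      exact (c.2.1 j).2.2 i hij
    have hprod : ∀ ω, term c ω = ∏ i ∈ U, ((Y i ω : ℕ) : ℝ≥0∞) :=
      fun ω => (Finset.prod_biUnion hPD).symm
    set A : Set Ω := ⋂ i ∈ U, {ω' | Y i ω' = 1} with hA
    have hAmeas : MeasurableSet A := by
      refine MeasurableSet.biInter U.countable_toSet fun i _ => ?_
      exact (hmeas i) (measurableSet_singleton 1)
    have hind_eq : ∀ ω, term c ω = Set.indicator A (1 : Ω → ℝ≥0∞) ω := by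
      intro ω
      by_cases hall : ∀ i ∈ U, Y i ω = 1
      · rw [hprod ω, Set.indicator_of_mem (by
          rw [hA]; exact Set.mem_iInter₂.mpr fun i hi => hall i hi)]
        rw [Finset.prod_congr rfl fun i hi => by rw [hall i hi, Nat.cast_one]]
        rw [Finset.prod_const_one, Pi.one_apply]
      · push_neg at hall
        obtain ⟨i, hiU, hi1⟩ := hall
        have hi0 : Y i ω = 0 := (hval i ω).resolve_right hi1
        rw [hprod ω, Set.indicator_of_notMem (by
          rw [hA]; intro hmem; exact hi1 (Set.mem_iInter₂.mp hmem i hiU))]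
        exact Finset.prod_eq_zero hiU (by rw [hi0, Nat.cast_zero])
    rw [lintegral_congr hind_eq, lintegral_indicator_one hAmeas]
    -- independence
    set emb : {i // i ∈ U} → {n : ℕ // 1 ≤ n} := fun x => ⟨x.1, hU1 x.1 x.2⟩ with hemb
    have hembinj : Function.Injective emb :=
      fun x y h => Subtype.ext (congrArg (Subtype.val : {n : ℕ // 1 ≤ n} → ℕ) h)
    set U' : Finset {n : ℕ // 1 ≤ n} := U.attach.map ⟨emb, hembinj⟩ with hU'
    have hAeq : A = ⋂ u ∈ U', (fun ω => Y u.1 ω) ⁻¹' {1} := by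
      rw [hA]
      ext ω
      constructor
      · intro hmem
        refine Set.mem_iInter₂.mpr fun u hu => ?_
        rw [hU', Finset.mem_map] at hu
        obtain ⟨x, -, hx⟩ := hu
        have hx1 : Y x.1 ω = 1 := Set.mem_iInter₂.mp hmem x.1 x.2
        simp only [← hx, hemb, Set.mem_preimage, Set.mem_singleton_iff]
        exact hx1
      · intro hmem
        refine Set.mem_iInter₂.mpr fun i hi => ?_
        have hu : emb ⟨i, hi⟩ ∈ U' := by
          rw [hU', Finset.mem_map]
          exact ⟨⟨i, hi⟩, Finset.mem_attach _ _, rfl⟩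
        have h2 := Set.mem_iInter₂.mp hmem (emb ⟨i, hi⟩) hu
        simpa [hemb] using h2
    have hkey : P (⋂ u ∈ U', (fun ω => Y u.1 ω) ⁻¹' {1})
        = ∏ u ∈ U', P ((fun ω => Y u.1 ω) ⁻¹' {1}) :=
      (ProbabilityTheory.iIndepFun_iff_measure_inter_preimage_eq_mul.mp hind) U'
        (sets := fun _ => ({1} : Set ℕ)) (fun i _ => measurableSet_singleton 1)
    rw [hAeq, hkey, hU', Finset.prod_map]
    have hone : ∀ x : {i // i ∈ U},
        P ((fun ω => Y ((⟨emb, hembinj⟩ : _ ↪ _) x).1 ω) ⁻¹' {1}) = Q s x.1 := by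
      intro x
      have hpre : (fun ω => Y x.1 ω) ⁻¹' {1} = {ω | Y x.1 ω = 1} := rfl
      have h1 : 1 ≤ x.1 := hU1 x.1 x.2
      rw [Function.Embedding.coeFn_mk, hemb, hpre, hP1 x.1 h1, Q, cast_rpow h1]
    rw [Finset.prod_congr rfl fun x _ => hone x, Finset.prod_attach U (fun i => Q s i)]
    exact Finset.prod_biUnion hPD
  -- the expectation of W is finite
  have hWint : ∫⁻ ω, W ω ∂P = ∑' c : Cfg k, ∏ j, w s (c.1 j) := by
    rw [hW, lintegral_tsum fun c => (htermmeas c).aemeasurable]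
    exact tsum_congr hterm_int
  have hMne : ∫⁻ ω, W ω ∂P ≠ ⊤ := by
    rw [hWint]
    refine ne_top_of_le_ne_top ?_ (tsum_w_le hθ₀ hθ₁ hs hk1)
    have hZ : Z θ ≠ ⊤ := tsum_guard_rpow_ne_top (by linarith : (1:ℝ) < 1 + θ)
    have hJ : (∑' m : ℕ, if 1 ≤ m then (m:ℝ≥0∞)^(-(θ*(k:ℝ))) else 0) ≠ ⊤ :=
      tsum_guard_rpow_ne_top hθk
    exact ENNReal.mul_ne_top (by norm_num)
      (ENNReal.mul_ne_top (ENNReal.pow_ne_top (by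
        exact ENNReal.add_ne_top.mpr ⟨by norm_num, hZ⟩)) hJ)
  -- Markov
  obtain ⟨T0, hT0⟩ := ENNReal.exists_nat_gt
    (show (∫⁻ ω, W ω ∂P) / ENNReal.ofReal ε ≠ ⊤ from
      (ENNReal.div_lt_top hMne ((ENNReal.ofReal_pos.mpr hε).ne')).ne)
  set T : ℕ := T0 + 1 with hT
  have hMT : ∫⁻ ω, W ω ∂P ≤ (T:ℝ≥0∞) * ENNReal.ofReal ε := by
    have h1 : (∫⁻ ω, W ω ∂P) / ENNReal.ofReal ε ≤ (T:ℝ≥0∞) :=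
      le_trans hT0.le (by exact_mod_cast Nat.le_succ T0)
    exact (ENNReal.div_le_iff_le_mul (Or.inl (ENNReal.ofReal_pos.mpr hε).ne')
      (Or.inl ENNReal.ofReal_ne_top)).mp h1
  have hPA : P {ω | ((T:ℕ):ℝ≥0∞) ≤ W ω} ≤ ENNReal.ofReal ε := by
    have hMark := mul_meas_ge_le_lintegral₀ (μ := P) hWmeas.aemeasurable ((T:ℕ):ℝ≥0∞)
    have h2 : ((T:ℕ):ℝ≥0∞) * P {ω | ((T:ℕ):ℝ≥0∞) ≤ W ω}
        ≤ ((T:ℕ):ℝ≥0∞) * ENNReal.ofReal ε := le_trans hMark hMT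
    exact (ENNReal.mul_le_mul_iff_right (Nat.cast_ne_zero.mpr (by omega))
      (ENNReal.natCast_ne_top T)).mp h2
  refine ⟨8 * (k + T), {ω | W ω < (T:ℝ≥0∞)}, ?_, ?_, ?_⟩
  · exact measurableSet_lt hWmeas measurable_const
  · have hcompl : {ω | W ω < (T:ℝ≥0∞)} = {ω | ((T:ℕ):ℝ≥0∞) ≤ W ω}ᶜ := by
      ext ω; simp [not_le]
    rw [hcompl, prob_compl_eq_one_sub (measurableSet_le measurable_const hWmeas)]
    exact tsub_le_tsub_left hPA 1
  · intro ω hω N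
    have hωlt : W ω < (T:ℝ≥0∞) := hω
    set E : Set ℕ := {n | 1 ≤ n ∧ Y n ω = 1} with hE
    have hE1 : ∀ n ∈ E, 1 ≤ n := fun n hn => hn.1
    -- key claim: no finset of representations of size 8*(k+T)
    have hclaim : ¬ ∃ S : Finset Rep, ↑S ⊆ repSet 2 E N ∧ S.card = 8 * (k + T) := by
      rintro ⟨S, hSsub, hScard⟩
      obtain ⟨d, hdS, hddisj⟩ := extract hE1 (k + T) S hSsub (le_of_eq hScard.symm)
      have hdrep : ∀ u, IsRep (d u) ∧ rval (d u) = N ∧ ↑(supp (d u)) ⊆ E :=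
        fun u => mem_repSet hE1 (hSsub (hdS u))
      have hdinj : Function.Injective d := by
        intro u v huv
        by_contra hne
        have hdisj := hddisj u v hne
        rw [huv, disjoint_self] at hdisj
        have := card_supp (hdrep v).1
        rw [hdisj] at this
        simp at this
      -- build T+1 configurations
      have hρmem : ∀ (t : Fin (T+1)) (i : Fin k), (if i.1 = 0 then t.1 else T + i.1) < k + T := by
        intro t i
        have := t.2
        have := i.2
        by_cases h : i.1 = 0 <;> simp [h] <;> omega
      set ρ : Fin (T+1) → Fin k → Fin (k+T) :=
        fun t i => ⟨if i.1 = 0 then t.1 else T + i.1, hρmem t i⟩ with hρ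
      have hρinj : ∀ t, Function.Injective (ρ t) := by
        intro t i i' h
        have hv : (if i.1 = 0 then t.1 else T + i.1) = (if i'.1 = 0 then t.1 else T + i'.1) :=
          congrArg Fin.val h
        have ht := t.2
        apply Fin.ext
        by_cases h1 : i.1 = 0 <;> by_cases h2 : i'.1 = 0 <;>
          simp [h1, h2] at hv ⊢ <;> omega
      have hconfig : ∀ t : Fin (T+1), Config k (fun i => d (ρ t i)) := by
        intro t
        refine ⟨fun i => (hdrep _).1, fun i j hij => hddisj _ _ fun hc => hij (hρinj t hc), ?_⟩
        intro i j
        rw [(hdrep _).2.1, (hdrep _).2.1]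
      set emb2 : Fin (T+1) → Cfg k := fun t => ⟨fun i => d (ρ t i), hconfig t⟩ with hemb2
      have hemb2inj : Function.Injective emb2 := by
        intro t t' h
        have h0 : d (ρ t ⟨0, by omega⟩) = d (ρ t' ⟨0, by omega⟩) :=
          congrArg (fun c : Cfg k => c.1 ⟨0, by omega⟩) h
        have := hdinj h0
        have hv := congrArg Fin.val this
        simp only [hρ] at hv
        exact Fin.ext (by simpa using hv)
      have hterm1 : ∀ t : Fin (T+1), term (emb2 t) ω = 1 := by
        intro t
        rw [hterm]
        refine Finset.prod_eq_one fun j _ => Finset.prod_eq_one fun i hi => ?_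
        have hiE : i ∈ E := (hdrep (ρ t j)).2.2 hi
        rw [hiE.2, Nat.cast_one]
      have hsum := ENNReal.sum_le_tsum (f := fun c : Cfg k => term c ω)
        (Finset.univ.map ⟨emb2, hemb2inj⟩)
      rw [Finset.sum_map] at hsum
      simp only [Function.Embedding.coeFn_mk] at hsum
      have hcard : ∑ t : Fin (T+1), term (emb2 t) ω = ((T:ℕ):ℝ≥0∞) + 1 := by
        rw [Finset.sum_congr rfl fun t _ => hterm1 t]
        simp [Finset.card_univ]
      rw [hcard] at hsum
      have : ((T:ℕ):ℝ≥0∞) < ((T:ℕ):ℝ≥0∞) + 1 := by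
        refine ENNReal.lt_add_right (ENNReal.natCast_ne_top T) one_ne_zero
      exact absurd (lt_of_lt_of_le this (le_trans hsum (le_of_eq rfl))) (not_lt.mpr hωlt.le)
    have hfin : (repSet 2 E N).Finite := by
      by_contra hinf
      obtain ⟨S, hS1, hS2⟩ := Set.Infinite.exists_subset_card_eq hinf (8 * (k + T))
      exact hclaim ⟨S, hS1, hS2⟩
    refine ⟨hfin, ?_⟩
    by_contra hK
    push_neg at hK
    have hcard : 8 * (k + T) ≤ hfin.toFinset.card := by
      rwa [Set.ncard_eq_toFinset_card _ hfin] at hK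
    obtain ⟨S, hSsub, hScard⟩ := Finset.exists_subset_card_eq hcard
    refine hclaim ⟨S, ?_, hScard⟩
    refine subset_trans (Finset.coe_subset.mpr hSsub) ?_
    rw [Set.Finite.coe_toFinset]
end

section
/- Let (Ω, P) be a probability space and let Y₁, Y₂, … be independent real-valued random variables, each taking only finitely many values, with Exp(Y_i) > 0 for every i. Set S_N = Y₁ + … + Y_N. If Exp(S_N) → ∞ as N → ∞ and ∑_{i=1}^∞ Var(Y_i)/(Exp(S_i))² < ∞, then S_N / Exp(S_N) → 1 as N → ∞ almost surely. -/
open MeasureTheory Filter ProbabilityTheory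

lemma slln_aux_var_sub_const {Ω : Type*} [MeasurableSpace Ω] {P : Measure Ω}
    [IsProbabilityMeasure P] {X : Ω → ℝ} (hX : Integrable X P) (c : ℝ) :
    variance (fun ω => X ω - c) P = variance X P := by
  have h : ∫ ω, (X ω - c) ∂P = (∫ ω, X ω ∂P) - c := by
    rw [integral_sub hX (integrable_const c), integral_const]; simp
  unfold variance evariance
  rw [h]
  congr 1
  refine lintegral_congr fun ω => ?_
  rw [sub_sub_sub_cancel_right]

lemma slln_aux_indepN {Ω : Type*} [MeasurableSpace Ω] {P : Measure Ω}
    {Y : ℕ → Ω → ℝ}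
    (hind : iIndepFun (fun i : {i : ℕ // 1 ≤ i} => Y i) P) :
    iIndepFun (fun k : ℕ => Y (k + 1)) P := by
  rw [iIndepFun_iff_measure_inter_preimage_eq_mul]
  intro S sets hsets
  classical
  set e : ℕ ↪ {i : ℕ // 1 ≤ i} :=
    ⟨fun k => ⟨k + 1, Nat.le_add_left 1 k⟩, fun a b h => by simpa using congrArg (·.1) h⟩ with he
  have h := hind.measure_inter_preimage_eq_mul (S.map e)
    (sets := fun j => sets (j.1 - 1)) (fun j hj => ?_)
  · rw [Finset.prod_map] at h
    have hset : (⋂ j ∈ S.map e, (fun i : {i : ℕ // 1 ≤ i} => Y i) j ⁻¹' sets (j.1 - 1))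
        = ⋂ k ∈ S, Y (k + 1) ⁻¹' sets k := by
      ext ω
      simp only [Set.mem_iInter, Finset.mem_map, Set.mem_preimage]
      constructor
      · intro hω k hk
        have := hω (e k) ⟨k, hk, rfl⟩
        simpa [he, DFunLike.coe] using this
      · intro hω j hj
        obtain ⟨k, hk, rfl⟩ := hj
        simpa [he, DFunLike.coe] using hω k hk
    rw [hset] at h
    rw [h]
    refine Finset.prod_congr rfl fun k hk => ?_
    show P (Y (k + 1) ⁻¹' sets (k + 1 - 1)) = _
    simp
  · simp only [Finset.mem_map] at hj
    obtain ⟨k, hk, rfl⟩ := hj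
    simpa [he, DFunLike.coe] using hsets k hk

/-- A variant of the strong law of large numbers: if `Y₁, Y₂, …` are independent simple random
variables with `Exp(Y i) > 0`, `S N = Y₁ + ⋯ + Y_N`, `Exp(S N) → ∞` and
`∑ i, Var(Y i) / (Exp(S i))² < ∞`, then `S N / Exp(S N) → 1` almost surely. -/
theorem slln_variant {Ω : Type*} [MeasurableSpace Ω] (P : Measure Ω)
    [IsProbabilityMeasure P] (Y : ℕ → Ω → ℝ)
    (hmeas : ∀ i, Measurable (Y i))
    (hsimple : ∀ i, (Set.range (Y i)).Finite)
    (hind : ProbabilityTheory.iIndepFun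
      (fun i : {i : ℕ // 1 ≤ i} => Y i) P)
    (hexp : ∀ i : ℕ, 1 ≤ i → 0 < ∫ ω, Y i ω ∂P)
    (htop : Tendsto (fun N => ∫ ω, ∑ i ∈ Finset.Icc 1 N, Y i ω ∂P) atTop atTop)
    (hvar : Summable (fun i : ℕ =>
      ProbabilityTheory.variance (Y (i + 1)) P /
        (∫ ω, ∑ j ∈ Finset.Icc 1 (i + 1), Y j ω ∂P) ^ 2)) :
    ∀ᵐ ω ∂P, Tendsto
      (fun N => (∑ i ∈ Finset.Icc 1 N, Y i ω) / ∫ ω', ∑ i ∈ Finset.Icc 1 N, Y i ω' ∂P)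
      atTop (nhds 1) := by
  classical
  set m : ℕ → ℝ := fun i => ∫ ω, Y i ω ∂P with hm
  set b : ℕ → ℝ := fun N => ∫ ω, ∑ i ∈ Finset.Icc 1 N, Y i ω ∂P with hbdef
  have hL2 : ∀ i, MemLp (Y i) 2 P := by
    intro i
    obtain ⟨C, hC⟩ := ((hsimple i).image abs).bddAbove
    refine MemLp.of_bound (hmeas i).aestronglyMeasurable C (ae_of_all _ fun ω => ?_)
    simpa [Real.norm_eq_abs] using hC ⟨Y i ω, ⟨ω, rfl⟩, rfl⟩
  have hint : ∀ i, Integrable (Y i) P := fun i => (hL2 i).integrable one_le_two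
  have hb : ∀ N, b N = ∑ k ∈ Finset.range N, m (k + 1) := by
    intro N
    rw [hbdef]
    simp only
    rw [integral_finset_sum _ fun i _ => hint i, ← Finset.Ico_add_one_right_eq_Icc,
      Finset.sum_Ico_eq_sum_range]
    simp [Nat.add_comm, hm]
  have hb0 : b 0 = 0 := by simp [hb]
  have hbmono : Monotone b := by
    refine monotone_nat_of_le_succ fun N => ?_
    rw [hb, hb, Finset.sum_range_succ]
    have : (0:ℝ) ≤ m (N + 1) := (hexp (N + 1) (Nat.le_add_left 1 N)).le
    linarith
  have hbpos : ∀ N, 1 ≤ N → 0 < b N := by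
    intro N hN
    have h1 : b 1 = m 1 := by rw [hb]; simp
    have hm1 : (0:ℝ) < m 1 := hexp 1 le_rfl
    calc (0:ℝ) < b 1 := by rw [h1]; exact hm1
    _ ≤ b N := hbmono hN
  have hbne : ∀ N, b (N + 1) ≠ 0 := fun N => (hbpos _ (Nat.le_add_left 1 N)).ne'
  -- centered normalized variables
  set Z : ℕ → Ω → ℝ :=
    fun k => (fun x => (b (k + 1))⁻¹ * (x - m (k + 1))) ∘ Y (k + 1) with hZ
  have hZapp : ∀ k ω, Z k ω = (b (k + 1))⁻¹ * (Y (k + 1) ω - m (k + 1)) := fun k ω => rfl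
  have hZsm : ∀ k, StronglyMeasurable (Z k) := fun k =>
    (((hmeas (k + 1)).sub_const _).const_mul _).stronglyMeasurable
  have hZ2 : ∀ k, MemLp (Z k) 2 P := fun k =>
    ((hL2 (k + 1)).sub (memLp_const _)).const_mul _
  have hZint : ∀ k, Integrable (Z k) P := fun k => (hZ2 k).integrable one_le_two
  have hZmean : ∀ k, ∫ ω, Z k ω ∂P = 0 := by
    intro k
    simp only [hZapp]
    rw [integral_const_mul, integral_sub (hint _) (integrable_const _), integral_const]
    simp [hm]
  have hZvar : ∀ k, variance (Z k) P = variance (Y (k + 1)) P / b (k + 1) ^ 2 := by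
    intro k
    have : variance (Z k) P
        = ((b (k + 1))⁻¹) ^ 2 * variance (fun ω => Y (k + 1) ω - m (k + 1)) P :=
      variance_const_mul _ _ _
    rw [this, slln_aux_var_sub_const (hint _), inv_pow]
    rw [inv_mul_eq_div]
  have hZsummable : Summable fun k => variance (Z k) P := by
    simp only [hZvar]; exact hvar
  set V := ∑' k, variance (Z k) P with hV
  have hZind : iIndepFun Z P :=
    (slln_aux_indepN hind).comp _ fun k => (measurable_id.sub_const _).const_mul _
  -- the martingale of partial sums
  set M : ℕ → Ω → ℝ := fun n => ∑ k ∈ Finset.range (n + 1), Z k with hM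
  have hMfn : ∀ n, M n = fun x => ∑ k ∈ Finset.range (n + 1), Z k x := fun n =>
    funext fun x => Finset.sum_apply _ _ _
  set ℱ := MeasureTheory.Filtration.natural Z hZsm with hF
  have hMadp : StronglyAdapted ℱ M := by
    intro n
    rw [hMfn n]
    refine Finset.stronglyMeasurable_fun_sum _ fun k hk => ?_
    exact ((Filtration.stronglyAdapted_natural hZsm) k).mono
      (ℱ.mono (Nat.lt_succ_iff.mp (Finset.mem_range.mp hk)))
  have hMint : ∀ n, Integrable (M n) P := fun n => by
    rw [hMfn n]; exact integrable_finset_sum _ fun k _ => hZint k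
  have hM2 : ∀ n, MemLp (M n) 2 P := fun n => by
    rw [hM]; exact memLp_finsetSum' _ fun k _ => hZ2 k
  have hmart : Martingale M ℱ P := by
    refine martingale_nat hMadp hMint fun n => ?_
    have h1 : M (n + 1) = M n + Z (n + 1) := Finset.sum_range_succ _ (n + 1)
    rw [h1]
    refine EventuallyEq.symm ?_
    calc P[M n + Z (n + 1)|ℱ n]
        =ᵐ[P] P[M n|ℱ n] + P[Z (n + 1)|ℱ n] := condExp_add (hMint n) (hZint _) _
      _ =ᵐ[P] M n + fun _ => ∫ ω, Z (n + 1) ω ∂P := by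
          refine EventuallyEq.add ?_ ?_
          · rw [condExp_of_stronglyMeasurable (ℱ.le n) (hMadp n) (hMint n)]
          · exact iIndepFun.condExp_natural_ae_eq_of_lt hZsm hZind (Nat.lt_succ_self n)
      _ = M n := by funext x; simp [hZmean (n + 1)]
  -- L¹ boundedness
  have hMmean : ∀ n, ∫ ω, M n ω ∂P = 0 := by
    intro n
    simp only [hM, Finset.sum_apply]
    rw [integral_finset_sum _ fun k _ => hZint k]
    simp [hZmean]
  have hMvar : ∀ n, variance (M n) P ≤ V := by
    intro n
    have heq : variance (M n) P = ∑ k ∈ Finset.range (n + 1), variance (Z k) P := by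
      rw [hM]
      exact IndepFun.variance_sum (fun k _ => hZ2 k)
        (fun i _ j hj hij => hZind.indepFun hij)
    rw [heq, hV]
    exact Summable.sum_le_tsum _ (fun k _ => variance_nonneg _ _) hZsummable
  have hbdd : ∀ n, eLpNorm (M n) 1 P ≤ ENNReal.ofReal (1 + V) := by
    intro n
    rw [eLpNorm_one_eq_lintegral_enorm, ← ofReal_integral_norm_eq_lintegral_enorm (hMint n)]
    refine ENNReal.ofReal_le_ofReal ?_
    have hsq : Integrable (fun ω => (M n ω) ^ 2) P := (hM2 n).integrable_sq
    have h1 : ∫ ω, ‖M n ω‖ ∂P ≤ ∫ ω, (1 + (M n ω) ^ 2) ∂P := by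
      refine integral_mono (hMint n).norm ((integrable_const 1).add hsq) fun ω => ?_
      rw [Real.norm_eq_abs]
      nlinarith [sq_nonneg (|M n ω| - 1), sq_abs (M n ω)]
    have h2 : ∫ ω, (1 + (M n ω) ^ 2) ∂P = 1 + ∫ ω, (M n ω) ^ 2 ∂P := by
      rw [integral_add (integrable_const 1) hsq, integral_const]; simp
    have h3 : ∫ ω, (M n ω) ^ 2 ∂P ≤ V := by
      have hv := variance_of_integral_eq_zero (hM2 n).aestronglyMeasurable.aemeasurable (hMmean n)
      have : ∫ ω, (M n ω) ^ 2 ∂P = variance (M n) P := by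
        rw [hv]
      rw [this]; exact hMvar n
    linarith
  have hconv : ∀ᵐ ω ∂P, ∃ c, Tendsto (fun n => M n ω) atTop (nhds c) := by
    refine hmart.submartingale.exists_ae_tendsto_of_bdd (R := (1 + V).toNNReal) fun n => ?_
    have := hbdd n
    rwa [ENNReal.ofReal] at this
  -- Kronecker's lemma, pointwise
  filter_upwards [hconv] with ω hω
  obtain ⟨c, hc⟩ := hω
  set s : ℕ → ℝ := fun n => ∑ k ∈ Finset.range n, Z k ω with hs
  have hsc : Tendsto s atTop (nhds c) := by
    rw [← tendsto_add_atTop_iff_nat 1]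
    exact hc.congr fun n => by simp [hM, hs, Finset.sum_apply]
  have hs0 : Tendsto (fun n => s n - c) atTop (nhds 0) := by
    simpa using hsc.sub (tendsto_const_nhds (x := c))
  have hkey : ∀ n, ∑ k ∈ Finset.range n, (Y (k + 1) ω - m (k + 1))
      = b n * (s n - c) - ∑ k ∈ Finset.range n, (b (k + 1) - b k) * (s k - c) := by
    intro n
    induction n with
    | zero => simp [hs, hb0]
    | succ n ih =>
      rw [Finset.sum_range_succ, ih, Finset.sum_range_succ ((fun k => (b (k + 1) - b k) * (s k - c)))]
      have hsucc : s (n + 1) = s n + (b (n + 1))⁻¹ * (Y (n + 1) ω - m (n + 1)) := by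
        rw [hs]; simp only; rw [Finset.sum_range_succ, hZapp]
      rw [hsucc]
      have hcancel : b (n + 1) * ((b (n + 1))⁻¹ * (Y (n + 1) ω - m (n + 1)))
          = Y (n + 1) ω - m (n + 1) := by
        rw [← mul_assoc, mul_inv_cancel₀ (hbne n), one_mul]
      linear_combination (-1 : ℝ) * hcancel
  have hgpos : ∀ k, 0 ≤ b (k + 1) - b k := fun k => sub_nonneg.2 (hbmono (Nat.le_succ k))
  have hgsum : ∀ n, ∑ k ∈ Finset.range n, (b (k + 1) - b k) = b n := by
    intro n
    rw [Finset.sum_range_sub fun k => b k, hb0, sub_zero]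
  have hgtop : Tendsto (fun n => ∑ k ∈ Finset.range n, (b (k + 1) - b k)) atTop atTop :=
    htop.congr fun n => (hgsum n).symm
  have ho : (fun k => (b (k + 1) - b k) * (s k - c)) =o[atTop] fun k => (b (k + 1) - b k) := by
    have := (Asymptotics.isBigO_refl (fun k => (b (k + 1) - b k)) atTop).mul_isLittleO
      ((Asymptotics.isLittleO_one_iff ℝ).2 hs0)
    simpa using this
  have hT : Tendsto
      (fun n => (∑ k ∈ Finset.range n, (b (k + 1) - b k) * (s k - c)) / b n) atTop (nhds 0) := by
    have := (ho.sum_range hgpos hgtop).tendsto_div_nhds_zero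
    exact this.congr fun n => by rw [hgsum]
  have hfinal : Tendsto
      (fun N => 1 + (s N - c) - (∑ k ∈ Finset.range N, (b (k + 1) - b k) * (s k - c)) / b N)
      atTop (nhds 1) := by
    have := ((tendsto_const_nhds (x := (1:ℝ)) (f := atTop)).add hs0).sub hT
    simpa using this
  refine hfinal.congr' ?_
  filter_upwards [eventually_ge_atTop 1] with N hN
  have hbN : b N ≠ 0 := (hbpos N hN).ne'
  have hS : (∑ i ∈ Finset.Icc 1 N, Y i ω)
      = b N + ∑ k ∈ Finset.range N, (Y (k + 1) ω - m (k + 1)) := by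
    rw [hb N, ← Finset.sum_add_distrib, ← Finset.Ico_add_one_right_eq_Icc, Finset.sum_Ico_eq_sum_range]
    simp [Nat.add_comm]
  rw [show (∫ ω', ∑ i ∈ Finset.Icc 1 N, Y i ω' ∂P) = b N from rfl, hS, hkey N]
  field_simp
  ring
end
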